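/- arXiv:1602.08508 — 3 statements merged into one kernel-verified Lean document; each statement's English description precedes it below -/
import Mathlib

section
/- Let 0 < v_ji < v_ik and d_ji, d_ik > 0. For any δ satisfying 0 < δ < min{(v_ik - v_ji)/d_ik, (v_ik - v_ji)/d_ji, (v_ik² - v_ji²)/(v_ji·d_ik + v_ik·d_ji)}, the total travel time strictly decreases: d_ji/(v_ji + d_ik·δ) + d_ik/(v_ik - d_ji·δ) < d_ji/v_ji + d_ik/v_ik. -/
theorem stmt_1 (vji vik dji dik δ : ℝ)
    (hvji : 0 < vji) (hv : vji < vik)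
    (hdji : 0 < dji) (hdik : 0 < dik)
    (hδ : 0 < δ)
    (hδlt : δ < min (min ((vik - vji) / dik) ((vik - vji) / dji))
      ((vik ^ 2 - vji ^ 2) / (vji * dik + vik * dji))) :
    dji / (vji + dik * δ) + dik / (vik - dji * δ)
      < dji / vji + dik / vik := by
  have h1 : δ < (vik - vji) / dji := lt_of_lt_of_le hδlt
    ((min_le_left _ _).trans (min_le_right _ _))
  have h3 : δ < (vik ^ 2 - vji ^ 2) / (vji * dik + vik * dji) :=
    lt_of_lt_of_le hδlt (min_le_right _ _)
  have hb : 0 < vik - dji * δ := by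
    have := (lt_div_iff₀ hdji).mp h1
    nlinarith
  have ha : 0 < vji + dik * δ := add_pos hvji (mul_pos hdik hδ)
  have hden : 0 < vji * dik + vik * dji := add_pos (mul_pos hvji hdik) (mul_pos (hvji.trans hv) hdji)
  have key : vji * (vji + dik * δ) < vik * (vik - dji * δ) := by
    have := (lt_div_iff₀ hden).mp h3
    nlinarith
  rw [div_add_div _ _ (ne_of_gt ha) (ne_of_gt hb),
      div_add_div _ _ (ne_of_gt hvji) (ne_of_gt (hvji.trans hv)),
      div_lt_div_iff₀ (mul_pos ha hb) (mul_pos hvji (hvji.trans hv))]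
  nlinarith [mul_pos hdji hdik, mul_pos (mul_pos hdji hdik) hδ,
    mul_pos ha hb, mul_pos hvji (hvji.trans hv), key,
    mul_lt_mul_of_pos_left key (mul_pos (mul_pos hdji hdik) hδ)]
end

section
/- Let D¹, D² > 0 and define β(v) = D¹·v/D² (the case δ = 0 of β(v) = D¹/(D²/v + δ)). Let f be strictly convex differentiable with f' ≥ 0 and f' strictly increasing on [v_F, u], and define H(v) = D¹·f(β(v)) - D²·f(v) on [vᵐⁱⁿ, vᵐᵃˣ] ⊆ [v_F, u] with vᵐⁱⁿ > 0 and β(v) ∈ [v_F, u] for all v in the interval. Then: if D¹ > D², H is strictly increasing (so its maximum over the interval is attained at vᵐᵃˣ); if D¹ < D², H is strictly decreasing (maximum at vᵐⁱⁿ); if D¹ = D², H is constant. -/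
set_option maxHeartbeats 1000000


theorem stmt_10 (f : ℝ → ℝ) (vF u D₁ D₂ vmin vmax : ℝ)
    (hf : StrictConvexOn ℝ Set.univ f)
    (hdiff : Differentiable ℝ f)
    (hderiv_nonneg : ∀ v ∈ Set.Icc vF u, 0 ≤ deriv f v)
    (hderiv_mono : StrictMonoOn (deriv f) (Set.Icc vF u))
    (hD₁ : 0 < D₁) (hD₂ : 0 < D₂)
    (hvmin : 0 < vmin) (hle : vmin ≤ vmax)
    (hsub : Set.Icc vmin vmax ⊆ Set.Icc vF u)
    (hβ : ∀ v ∈ Set.Icc vmin vmax, D₁ * v / D₂ ∈ Set.Icc vF u) :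
    (D₂ < D₁ → StrictMonoOn (fun v => D₁ * f (D₁ * v / D₂) - D₂ * f v)
        (Set.Icc vmin vmax))
      ∧ (D₁ < D₂ → StrictAntiOn (fun v => D₁ * f (D₁ * v / D₂) - D₂ * f v)
        (Set.Icc vmin vmax))
      ∧ (D₁ = D₂ → ∀ v ∈ Set.Icc vmin vmax, ∀ w ∈ Set.Icc vmin vmax,
        D₁ * f (D₁ * v / D₂) - D₂ * f v = D₁ * f (D₁ * w / D₂) - D₂ * f w) := by
  have hmono : MonotoneOn f (Set.Icc vF u) := by
    apply monotoneOn_of_deriv_nonneg (convex_Icc vF u) hdiff.continuous.continuousOn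
      hdiff.differentiableOn
    intro x hx
    exact hderiv_nonneg x (interior_subset hx)
  refine ⟨?_, ?_, ?_⟩
  · intro hD x hx y hy hxy
    set bx := D₁ * x / D₂ with hbxdef
    set by' := D₁ * y / D₂ with hbydef
    have hx0 : 0 < x := lt_of_lt_of_le hvmin hx.1
    have hxbx : x < bx := by rw [hbxdef, lt_div_iff₀ hD₂]; nlinarith
    have hyby : y < by' := by rw [hbydef, lt_div_iff₀ hD₂]; nlinarith
    have hbxy : bx < by' := by
      rw [hbxdef, hbydef, div_lt_div_iff₀ hD₂ hD₂]; nlinarith [mul_pos hD₁ hD₂]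
    have hxI : x ∈ Set.Icc vF u := hsub hx
    have hyI : y ∈ Set.Icc vF u := hsub hy
    have h1 : (f y - f x) / (y - x) < (f by' - f x) / (by' - x) :=
      hf.secant_strict_mono (Set.mem_univ x) (Set.mem_univ y) (Set.mem_univ by')
        (ne_of_gt hxy) (ne_of_gt (hxy.trans hyby)) hyby
    have h2 : (f x - f by') / (x - by') ≤ (f bx - f by') / (bx - by') :=
      hf.convexOn.secant_mono (Set.mem_univ by') (Set.mem_univ x) (Set.mem_univ bx)
        (ne_of_lt (hxy.trans hyby)) (ne_of_lt hbxy) (le_of_lt hxbx)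
    rw [← neg_div_neg_eq, neg_sub, neg_sub, ← neg_div_neg_eq (f bx - f by'), neg_sub, neg_sub] at h2
    have hs : (f y - f x) / (y - x) < (f by' - f bx) / (by' - bx) := lt_of_lt_of_le h1 h2
    rw [div_lt_div_iff₀ (by linarith) (by linarith)] at hs
    have hBnn : 0 ≤ f y - f x := sub_nonneg.2 (hmono hxI hyI hxy.le)
    have he : D₂ * (by' - bx) = D₁ * (y - x) := by rw [hbxdef, hbydef]; field_simp
    have key : D₂ * (f y - f x) < D₁ * (f by' - f bx) := by
      have h3 : (f y - f x) * (by' - bx) * D₂ < (f by' - f bx) * (y - x) * D₂ :=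
        mul_lt_mul_of_pos_right hs hD₂
      -- so (f y - f x) * D₁ * (y - x) < (f by' - f bx) * (y - x) * D₂
      have heq : (f y - f x) * (by' - bx) * D₂ = (f y - f x) * (D₁ * (y - x)) := by
        linear_combination (f y - f x) * he
      have h4 : (f y - f x) * (D₁ * (y - x)) < (f by' - f bx) * (y - x) * D₂ := heq ▸ h3
      have hyx : 0 < y - x := by linarith
      have h5 : D₁ * (f y - f x) < D₂ * (f by' - f bx) :=
        lt_of_mul_lt_mul_right (by nlinarith [h4]) hyx.le
      have hApos : 0 < f by' - f bx := by nlinarith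
      nlinarith
    simp only
    linarith
  · intro hD x hx y hy hxy
    set bx := D₁ * x / D₂ with hbxdef
    set by' := D₁ * y / D₂ with hbydef
    have hx0 : 0 < x := lt_of_lt_of_le hvmin hx.1
    have hxbx : bx < x := by rw [hbxdef, div_lt_iff₀ hD₂]; nlinarith
    have hyby : by' < y := by rw [hbydef, div_lt_iff₀ hD₂]; nlinarith
    have hbxy : bx < by' := by
      rw [hbxdef, hbydef, div_lt_div_iff₀ hD₂ hD₂]; nlinarith [mul_pos hD₁ hD₂]
    have hxI : x ∈ Set.Icc vF u := hsub hx
    have hyI : y ∈ Set.Icc vF u := hsub hy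
    have hbxI : bx ∈ Set.Icc vF u := hβ x hx
    have hbyI : by' ∈ Set.Icc vF u := hβ y hy
    -- slope(bx,by') ≤ slope(bx,y)
    have h2 : (f by' - f bx) / (by' - bx) ≤ (f y - f bx) / (y - bx) :=
      hf.convexOn.secant_mono (Set.mem_univ bx) (Set.mem_univ by') (Set.mem_univ y)
        (ne_of_gt hbxy) (ne_of_gt (hbxy.trans hyby)) (le_of_lt hyby)
    -- slope(bx,y) < slope(x,y)
    have h1 : (f bx - f y) / (bx - y) < (f x - f y) / (x - y) :=
      hf.secant_strict_mono (Set.mem_univ y) (Set.mem_univ bx) (Set.mem_univ x)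
        (ne_of_lt (hbxy.trans hyby)) (ne_of_lt hxy) hxbx
    rw [← neg_div_neg_eq, neg_sub, neg_sub, ← neg_div_neg_eq (f x - f y), neg_sub, neg_sub] at h1
    have hs : (f by' - f bx) / (by' - bx) < (f y - f x) / (y - x) := lt_of_le_of_lt h2 h1
    rw [div_lt_div_iff₀ (by linarith) (by linarith)] at hs
    have hAnn : 0 ≤ f by' - f bx := sub_nonneg.2 (hmono hbxI hbyI hbxy.le)
    have he : D₂ * (by' - bx) = D₁ * (y - x) := by rw [hbxdef, hbydef]; field_simp
    have key : D₁ * (f by' - f bx) < D₂ * (f y - f x) := by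
      have h3 : (f by' - f bx) * (y - x) * D₂ < (f y - f x) * (by' - bx) * D₂ :=
        mul_lt_mul_of_pos_right hs hD₂
      have heq : (f y - f x) * (by' - bx) * D₂ = (f y - f x) * (D₁ * (y - x)) := by
        linear_combination (f y - f x) * he
      have h4 : (f by' - f bx) * (y - x) * D₂ < (f y - f x) * (D₁ * (y - x)) := heq ▸ h3
      have hyx : 0 < y - x := by linarith
      have h5 : D₂ * (f by' - f bx) < D₁ * (f y - f x) :=
        lt_of_mul_lt_mul_right (by nlinarith [h4]) hyx.le
      have hBpos : 0 < f y - f x := by nlinarith [h5, hAnn, mul_nonneg hD₂.le hAnn]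
      nlinarith [mul_lt_mul_of_pos_left h5 hD₁,
        mul_pos (mul_pos (sub_pos.2 hD) (by linarith : (0:ℝ) < D₁ + D₂)) hBpos, hD₂.le]
    simp only
    linarith
  · intro hD v hv w hw
    subst hD
    have h : ∀ z : ℝ, D₁ * z / D₁ = z := fun z => by field_simp
    simp [h]
end

section
/- Let f be strictly convex differentiable with f' strictly increasing and f'(v_F) = 0, v_F > 0. Let D¹, D² > 0, δ ∈ ℝ, β(v) = D¹/(D²/v + δ), and H(v) = D¹·f(β(v)) - D²·f(v) on a closed interval [p, q] with 0 < p ≤ q, where for all v ∈ [p,q]: v ≥ v_F, β(v) ≥ v_F, and D²/v + δ > 0. Then the maximum of H over [p, q] is attained at p, at q, or at v* = (D¹-D²)/δ (when δ ≠ 0 and v* ∈ [p,q]). -/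
set_option maxHeartbeats 1000000 in
theorem stmt_15 (f : ℝ → ℝ) (vF D₁ D₂ δ p q : ℝ)
    (hf : StrictConvexOn ℝ Set.univ f)
    (hdiff : Differentiable ℝ f)
    (hmono : StrictMono (deriv f))
    (hvF : 0 < vF) (hvF' : deriv f vF = 0)
    (hD₁ : 0 < D₁) (hD₂ : 0 < D₂)
    (hp : 0 < p) (hpq : p ≤ q)
    (hdom : ∀ v ∈ Set.Icc p q,
      vF ≤ v ∧ vF ≤ D₁ / (D₂ / v + δ) ∧ 0 < D₂ / v + δ) :
    IsMaxOn (fun v => D₁ * f (D₁ / (D₂ / v + δ)) - D₂ * f v) (Set.Icc p q) p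
      ∨ IsMaxOn (fun v => D₁ * f (D₁ / (D₂ / v + δ)) - D₂ * f v) (Set.Icc p q) q
      ∨ (δ ≠ 0 ∧ (D₁ - D₂) / δ ∈ Set.Icc p q ∧
        IsMaxOn (fun v => D₁ * f (D₁ / (D₂ / v + δ)) - D₂ * f v)
          (Set.Icc p q) ((D₁ - D₂) / δ)) := by
  set H : ℝ → ℝ := fun v => D₁ * f (D₁ / (D₂ / v + δ)) - D₂ * f v with hH
  have hne : Set.Nonempty (Set.Icc p q) := Set.nonempty_Icc.2 hpq
  have hcont : ContinuousOn H (Set.Icc p q) := by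
    apply ContinuousOn.sub
    · apply ContinuousOn.mul continuousOn_const
      apply hdiff.continuous.comp_continuousOn
      apply ContinuousOn.div continuousOn_const
      · exact (continuousOn_const.div continuousOn_id
          (fun v hv => ne_of_gt (lt_of_lt_of_le hp hv.1))).add continuousOn_const
      · intro v hv; exact ne_of_gt (hdom v hv).2.2
    · exact continuousOn_const.mul hdiff.continuous.continuousOn
  obtain ⟨c, hcmem, hcmax⟩ := isCompact_Icc.exists_isMaxOn hne hcont
  rcases eq_or_lt_of_le hcmem.1 with hpc | hpc
  · left; intro x hx; simp only [Set.mem_setOf_eq]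
    show H x ≤ H p
    rw [show p = c from hpc]; exact hcmax hx
  rcases eq_or_lt_of_le hcmem.2 with hcq | hcq
  · right; left; intro x hx; simp only [Set.mem_setOf_eq]
    show H x ≤ H q
    rw [show q = c from hcq.symm]; exact hcmax hx
  -- c is an interior maximizer
  have hc0 : 0 < c := lt_trans hp hpc
  have hcne : c ≠ 0 := ne_of_gt hc0
  have hden : 0 < D₂ / c + δ := (hdom c hcmem).2.2
  have hdenne : D₂ / c + δ ≠ 0 := ne_of_gt hden
  have hceq : c * (D₂ / c + δ) = D₂ + δ * c := by field_simp
  have hs : 0 < D₂ + δ * c := by nlinarith [mul_pos hc0 hden]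
  have hsne : D₂ + δ * c ≠ 0 := ne_of_gt hs
  -- derivative of the inner function at c
  have hinner : HasDerivAt (fun v : ℝ => D₂ / v + δ) (-(D₂ / c ^ 2)) c := by
    have heq : (fun v : ℝ => D₂ / v + δ) = fun x => D₂ * x⁻¹ + δ := by
      funext v; rw [div_eq_mul_inv]
    rw [heq]
    have h := ((hasDerivAt_inv hcne).const_mul D₂).add_const δ
    exact h.congr_deriv (by ring)
  have hg : HasDerivAt (fun v : ℝ => D₁ / (D₂ / v + δ))
      (D₁ * (D₂ / c ^ 2 / (D₂ / c + δ) ^ 2)) c := by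
    have heq : (fun v : ℝ => D₁ / (D₂ / v + δ)) = fun v => D₁ * (D₂ / v + δ)⁻¹ := by
      funext v; rw [div_eq_mul_inv]
    rw [heq]
    have h := (hinner.inv hdenne).const_mul D₁
    exact h.congr_deriv (by ring)
  have hfg : HasDerivAt (fun v : ℝ => f (D₁ / (D₂ / v + δ)))
      (deriv f (D₁ / (D₂ / c + δ)) * (D₁ * (D₂ / c ^ 2 / (D₂ / c + δ) ^ 2))) c :=
    ((hdiff _).hasDerivAt).comp c hg
  have hHd : HasDerivAt H
      (D₁ * (deriv f (D₁ / (D₂ / c + δ)) * (D₁ * (D₂ / c ^ 2 / (D₂ / c + δ) ^ 2)))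
        - D₂ * deriv f c) c :=
    (hfg.const_mul D₁).sub (((hdiff c).hasDerivAt).const_mul D₂)
  have hzero : D₁ * (deriv f (D₁ / (D₂ / c + δ)) * (D₁ * (D₂ / c ^ 2 / (D₂ / c + δ) ^ 2)))
      - D₂ * deriv f c = 0 := by
    have hloc : IsLocalMax H c := hcmax.isLocalMax (Icc_mem_nhds hpc hcq)
    have := hloc.deriv_eq_zero
    rwa [hHd.deriv] at this
  -- reformulate with t = D₁ / (D₂ + δ c)
  set t : ℝ := D₁ / (D₂ + δ * c) with ht
  have ht0 : 0 < t := div_pos hD₁ hs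
  have hβ : D₁ / (D₂ / c + δ) = t * c := by
    rw [ht]; field_simp
  have h2 : D₁ * (D₂ / c ^ 2 / (D₂ / c + δ) ^ 2) = D₂ * t ^ 2 / D₁ := by
    rw [ht]; field_simp
  have hkey : t ^ 2 * deriv f (t * c) = deriv f c := by
    rw [hβ, h2] at hzero
    have h3 : D₁ * (deriv f (t * c) * (D₂ * t ^ 2 / D₁)) = D₂ * (t ^ 2 * deriv f (t * c)) := by
      field_simp
    rw [h3] at hzero
    exact mul_left_cancel₀ (ne_of_gt hD₂) (sub_eq_zero.mp hzero)
  -- sign facts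
  have hfc : 0 ≤ deriv f c := by
    rcases eq_or_lt_of_le (hdom c hcmem).1 with h | h
    · rw [← h, hvF']
    · exact le_of_lt (hvF' ▸ hmono h)
  have hftc : 0 ≤ deriv f (t * c) := by
    have h0 := (hdom c hcmem).2.1
    rw [hβ] at h0
    rcases eq_or_lt_of_le h0 with h | h
    · rw [← h, hvF']
    · exact le_of_lt (hvF' ▸ hmono h)
  have ht1 : t = 1 := by
    rcases lt_trichotomy t 1 with h | h | h
    · exfalso
      have h1 : t * c < c := by nlinarith
      have h2' : deriv f (t * c) < deriv f c := hmono h1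
      have h5 : (0:ℝ) ≤ 1 - t ^ 2 := by nlinarith
      have hx : t ^ 2 * deriv f (t * c) ≤ deriv f (t * c) := by nlinarith [mul_nonneg h5 hftc]
      linarith
    · exact h
    · exfalso
      have h1 : c < t * c := by nlinarith
      have h2' : deriv f c < deriv f (t * c) := hmono h1
      have h5 : (0:ℝ) ≤ t ^ 2 - 1 := by nlinarith
      have hx : deriv f (t * c) ≤ t ^ 2 * deriv f (t * c) := by nlinarith [mul_nonneg h5 hftc]
      linarith
  have hDc : D₁ = D₂ + δ * c := by
    have h4 : D₁ = t * (D₂ + δ * c) := by rw [ht]; field_simp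
    rw [ht1, one_mul] at h4; exact h4
  by_cases hδ : δ = 0
  · -- then D₁ = D₂ and H ≡ 0 on positives
    left
    have hD : D₁ = D₂ := by rw [hDc, hδ]; ring
    have hz : ∀ y : ℝ, 0 < y → H y = 0 := by
      intro y hy
      show D₁ * f (D₁ / (D₂ / y + δ)) - D₂ * f y = 0
      rw [hδ, hD, add_zero, div_div_eq_mul_div, mul_comm D₂ y, mul_div_assoc,
        div_self (ne_of_gt hD₂), mul_one]
      ring
    intro x hx; simp only [Set.mem_setOf_eq]
    show H x ≤ H p
    rw [hz x (lt_of_lt_of_le hp hx.1), hz p hp]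
  · right; right
    have hc : (D₁ - D₂) / δ = c := by
      rw [hDc]; field_simp; ring
    exact ⟨hδ, hc ▸ hcmem, hc ▸ hcmax⟩
end
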